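/- For all n ≥ 1, the total number of up steps over all dispersed Dyck paths of length n is U(n) = (n·C(n,⌊n/2⌋) − 2^n + C(n,⌊n/2⌋))/2; equivalently 2·U(n) = (n+1)·C(n,⌊n/2⌋) − 2^n. -/

import Mathlib

inductive DStep | up | down | right
deriving DecidableEq, Repr

instance : Fintype DStep :=
  ⟨{.up, .down, .right}, fun x => by cases x <;> decide⟩

/-- Run a dispersed Dyck path from height `h`; `none` if an illegal step occurs,
otherwise the final height. Down steps require positive height; right steps require height 0. -/
def DStep.run : ℕ → List DStep → Option ℕ
  | h, [] => some h
  | h, .up :: l => DStep.run (h + 1) l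
  | h + 1, .down :: l => DStep.run h l
  | 0, .down :: _ => none
  | 0, .right :: l => DStep.run 0 l
  | _ + 1, .right :: _ => none

/-- A dispersed Dyck path: starts and ends at height 0, all steps legal. -/
def IsDDP (l : List DStep) : Prop := DStep.run 0 l = some 0

instance : DecidablePred IsDDP := fun l => by unfold IsDDP; infer_instance

/-- The finset of all dispersed Dyck paths of length `n`. -/
def DDPs (n : ℕ) : Finset (List.Vector DStep n) :=
  Finset.univ.filter (fun v => IsDDP v.toList)

/-- Number of dispersed Dyck paths of length `n`. -/
def dD (n : ℕ) : ℕ := (DDPs n).card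

/-- Total number of up steps over all DDPs of length `n`. -/
def U (n : ℕ) : ℕ := ∑ v ∈ DDPs n, v.toList.count DStep.up

/-- Total number of down steps over all DDPs of length `n`. -/
def D (n : ℕ) : ℕ := ∑ v ∈ DDPs n, v.toList.count DStep.down

/-- Total number of right steps over all DDPs of length `n`. -/
def R (n : ℕ) : ℕ := ∑ v ∈ DDPs n, v.toList.count DStep.right

/-- `i` is the position of a 1-ascent in `l`: an up step with no adjacent up step. -/
def IsOneAscentAt (l : List DStep) (i : ℕ) : Prop :=
  l[i]? = some .up ∧ l[i + 1]? ≠ some .up ∧ (i = 0 ∨ l[i - 1]? ≠ some .up)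

instance (l : List DStep) : DecidablePred (IsOneAscentAt l) := fun i => by
  unfold IsOneAscentAt; infer_instance

/-- Number of 1-ascents in `l`. -/
def oneAsc (l : List DStep) : ℕ :=
  ((Finset.range l.length).filter (IsOneAscentAt l)).card

/-- Total number of 1-ascents over all DDPs of length `n`. -/
def A (n : ℕ) : ℕ := ∑ v ∈ DDPs n, oneAsc v.toList

/-- Signed final height of a plain path (ignoring any right steps). -/
def psum : List DStep → ℤ
  | [] => 0
  | .up :: l => 1 + psum l
  | .down :: l => -1 + psum l
  | .right :: l => psum l


def consEquiv (n : ℕ) : DStep × List.Vector DStep n ≃ List.Vector DStep (n+1) where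
  toFun p := p.1 ::ᵥ p.2
  invFun v := (v.head, v.tail)
  left_inv p := by simp
  right_inv v := by simp

lemma sum_nil (f : List DStep → ℕ) : ∑ v : List.Vector DStep 0, f v.toList = f [] := by
  rw [show (Finset.univ : Finset (List.Vector DStep 0)) = {List.Vector.nil} from by
    ext v; simp [v.eq_nil]]
  simp

lemma sum_cons (n : ℕ) (f : List DStep → ℕ) :
    ∑ v : List.Vector DStep (n+1), f v.toList
      = (∑ v : List.Vector DStep n, f (.up :: v.toList))
      + (∑ v : List.Vector DStep n, f (.down :: v.toList))
      + (∑ v : List.Vector DStep n, f (.right :: v.toList)) := by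
  rw [← Equiv.sum_comp (consEquiv n) (fun v => f v.toList)]
  rw [Fintype.sum_prod_type]
  rw [show (Finset.univ : Finset DStep) = {.up, .down, .right} from by decide]
  simp [consEquiv, add_assoc]

def gf (w : List DStep → ℕ) (h : ℕ) (l : List DStep) : ℕ :=
  if DStep.run h l = some 0 then w l else 0

def gcnt (w : List DStep → ℕ) (n h : ℕ) : ℕ :=
  ∑ v : List.Vector DStep n, gf w h v.toList

@[simp] lemma run_up (h : ℕ) (l : List DStep) : DStep.run h (.up :: l) = DStep.run (h+1) l := by cases h <;> rfl
@[simp] lemma run_down (h : ℕ) (l : List DStep) : DStep.run (h+1) (.down :: l) = DStep.run h l := rfl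
@[simp] lemma run_down0 (l : List DStep) : DStep.run 0 (.down :: l) = none := rfl
@[simp] lemma run_right0 (l : List DStep) : DStep.run 0 (.right :: l) = DStep.run 0 l := rfl
@[simp] lemma run_right (h : ℕ) (l : List DStep) : DStep.run (h+1) (.right :: l) = none := rfl
@[simp] lemma run_nilc (h : ℕ) : DStep.run h [] = some h := by cases h <;> rfl

def cnt : ℕ → ℕ → ℕ := gcnt (fun _ => 1)
def ucnt : ℕ → ℕ → ℕ := gcnt (fun l => l.count .up)
def rcnt : ℕ → ℕ → ℕ := gcnt (fun l => l.count .right)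

lemma cnt_zero (h : ℕ) : cnt 0 h = if h = 0 then 1 else 0 := by
  unfold cnt gcnt; rw [sum_nil (gf (fun _ => 1) h)]; simp [gf, eq_comm]

lemma cnt_succ_zero (n : ℕ) : cnt (n+1) 0 = cnt n 1 + cnt n 0 := by
  unfold cnt gcnt; rw [sum_cons n (gf (fun _ => 1) 0)]; simp [gf]; rw [Finset.card_filter]; congr

lemma cnt_succ_succ (n h : ℕ) : cnt (n+1) (h+1) = cnt n (h+2) + cnt n h := by
  unfold cnt gcnt; rw [sum_cons n (gf (fun _ => 1) (h+1))]; simp [gf]; rw [Finset.card_filter]; congr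

lemma ucnt_zero (h : ℕ) : ucnt 0 h = 0 := by
  unfold ucnt gcnt; rw [sum_nil (gf (fun l => l.count .up) h)]; simp [gf]

lemma rcnt_zero (h : ℕ) : rcnt 0 h = 0 := by
  unfold rcnt gcnt; rw [sum_nil (gf (fun l => l.count .right) h)]; simp [gf]

lemma rcnt_succ_zero (n : ℕ) : rcnt (n+1) 0 = rcnt n 1 + (rcnt n 0 + cnt n 0) := by
  unfold rcnt cnt gcnt; rw [sum_cons n (gf (fun l => l.count .right) 0)]
  simp [gf, List.count_cons]
  rw [Finset.card_filter, ← Finset.sum_add_distrib]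
  exact Finset.sum_congr rfl fun x _ => by split <;> simp

lemma rcnt_succ_succ (n h : ℕ) : rcnt (n+1) (h+1) = rcnt n (h+2) + rcnt n h := by
  unfold rcnt gcnt; rw [sum_cons n (gf (fun l => l.count .right) (h+1))]; simp [gf, List.count_cons]

lemma choose_symm_half (n : ℕ) : n.choose ((n+1)/2) = n.choose (n/2) := by
  have h1 : (n+1)/2 ≤ n := by omega
  have h2 : n - (n+1)/2 = n/2 := by omega
  rw [← Nat.choose_symm h1, h2]

lemma cnt_eq (n : ℕ) : ∀ h, cnt n h = n.choose ((n+h+1)/2) := by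
  induction n with
  | zero =>
    intro h
    rw [cnt_zero]
    rcases h with _ | h
    · simp
    · rw [if_neg (by omega), Nat.choose_eq_zero_of_lt (by omega)]
  | succ n ih =>
    intro h
    rcases h with _ | h
    · rw [cnt_succ_zero, ih, ih, choose_symm_half]
      have h1 : (n+0+1+1)/2 = n/2 + 1 := by omega
      have h2 : (n+1+0+1)/2 = n/2 + 1 := by omega
      rw [h1, Nat.choose_succ_succ]
      exact add_comm _ _
    · rw [cnt_succ_succ, ih, ih]
      have h1 : (n+(h+2)+1)/2 = (n+h+1)/2 + 1 := by omega
      have h2 : (n+1+(h+1)+1)/2 = (n+h+1)/2 + 1 := by omega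
      rw [h1, h2, Nat.choose_succ_succ, add_comm]

def scnt (n h : ℕ) : ℕ := ∑ j ∈ Finset.range (h+1), cnt n j

lemma scnt_zero (n : ℕ) : scnt n 0 = cnt n 0 := by simp [scnt]

lemma scnt_succ_zero (n : ℕ) : scnt (n+1) 0 = scnt n 1 := by
  simp [scnt, Finset.sum_range_succ, cnt_succ_zero]; omega

lemma scnt_succ_succ (n : ℕ) : ∀ h, scnt (n+1) (h+1) = scnt n h + scnt n (h+2) := by
  intro h
  induction h with
  | zero =>
    simp [scnt, Finset.sum_range_succ, cnt_succ_zero, cnt_succ_succ]; omega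
  | succ h ih =>
    have e1 : scnt (n+1) (h+2) = scnt (n+1) (h+1) + cnt (n+1) (h+2) := by
      simp [scnt, Finset.sum_range_succ]
    have e2 : scnt n (h+1) = scnt n h + cnt n (h+1) := by
      simp [scnt, Finset.sum_range_succ]
    have e3 : scnt n (h+3) = scnt n (h+2) + cnt n (h+3) := by
      simp [scnt, Finset.sum_range_succ]
    have e4 : cnt n (h+1+2) = cnt n (h+3) := by norm_num
    rw [e1, ih, cnt_succ_succ, e2, e3, e4]; omega

lemma rs (n : ℕ) : ∀ h, rcnt n h + scnt n h = 2^n := by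
  induction n with
  | zero =>
    intro h
    rw [rcnt_zero]
    have : ∀ h, scnt 0 h = 1 := by
      intro h; induction h with
      | zero => simp [scnt, cnt_zero]
      | succ h ih =>
        have : scnt 0 (h+1) = scnt 0 h + cnt 0 (h+1) := by
          simp [scnt, Finset.sum_range_succ]
        rw [this, ih, cnt_zero]; simp
    simp [this]
  | succ n ih =>
    intro h
    rcases h with _ | h
    · rw [rcnt_succ_zero, scnt_succ_zero]
      have := ih 0
      have := ih 1
      rw [scnt_zero] at *
      have : 2^(n+1) = 2^n + 2^n := by ring
      omega
    · rw [rcnt_succ_succ, scnt_succ_succ]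
      have := ih h
      have := ih (h+2)
      have : 2^(n+1) = 2^n + 2^n := by ring
      omega

lemma count_length (l : List DStep) :
    l.count .up + l.count .down + l.count .right = l.length := by
  induction l with
  | nil => simp
  | cons s l ih => cases s <;> simp [List.count_cons] <;> omega

lemma run_count : ∀ (l : List DStep) (h k : ℕ), DStep.run h l = some k →
    l.count DStep.down + k = l.count DStep.up + h := by
  intro l
  induction l with
  | nil => intro h k hk; simp at hk; simp [hk]
  | cons s l ih =>
    intro h k hk
    cases s with
    | up =>
      have := ih (h+1) k (by simpa using hk)
      simp [List.count_cons]; omega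
    | down =>
      rcases h with _ | h
      · simp at hk
      · have := ih h k (by simpa using hk)
        simp [List.count_cons]; omega
    | right =>
      rcases h with _ | h
      · have := ih 0 k (by simpa using hk)
        simp [List.count_cons]; omega
      · simp at hk

lemma key (n : ℕ) : 2 * ucnt n 0 + rcnt n 0 = n * cnt n 0 := by
  unfold ucnt rcnt cnt gcnt
  rw [Finset.mul_sum, Finset.mul_sum, ← Finset.sum_add_distrib]
  refine Finset.sum_congr rfl fun v _ => ?_
  unfold gf
  split
  · rename_i hrun
    have h1 := run_count v.toList 0 0 hrun
    have h2 := count_length v.toList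
    rw [List.Vector.toList_length] at h2
    simp only [mul_one]
    omega
  · simp

/-- For `n ≥ 1`, `2·U(n) = (n+1)·C(n,⌊n/2⌋) − 2^n`, i.e. the total number of up steps
over all DDPs of length `n` is `((n+1)·C(n,⌊n/2⌋) − 2^n)/2`. -/
theorem up_closed (n : ℕ) (hn : 1 ≤ n) :
    2 * U n + 2 ^ n = (n + 1) * n.choose (n / 2) := by
  have hU : U n = ucnt n 0 := by
    unfold U DDPs ucnt gcnt gf
    rw [Finset.sum_filter]
    rfl
  have h1 := key n
  have h2 := rs n 0
  rw [scnt_zero] at h2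
  have h3 : cnt n 0 = n.choose (n/2) := by
    rw [cnt_eq n 0, show (n+0+1)/2 = (n+1)/2 by norm_num, choose_symm_half]
  have h4 : (n+1) * n.choose (n/2) = n * cnt n 0 + cnt n 0 := by rw [h3]; ring
  rw [hU]
  omega
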